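/- For any random variable X, the variance of the mid-distribution transform F^mid(X) equals (1 - Σ_x p(x)^3)/12, where the sum ranges over all atoms x of X. -/

import Mathlib

open MeasureTheory Set

noncomputable def hk (a b : ℝ) : ℝ := if a < b then 1 else if a = b then 1/2 else 0

lemma hk_lt {a b : ℝ} (h : a < b) : hk a b = 1 := if_pos h

lemma hk_self (a : ℝ) : hk a a = 1/2 := by unfold hk; simp

lemma hk_gt {a b : ℝ} (h : b < a) : hk a b = 0 := by
  unfold hk; rw [if_neg (not_lt.2 h.le), if_neg h.ne']

lemma hk_abs_le (a b : ℝ) : |hk a b| ≤ 1 := by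
  unfold hk; split_ifs <;> rw [abs_of_nonneg] <;> norm_num

lemma hk_add (a b : ℝ) : hk a b + hk b a = 1 := by
  rcases lt_trichotomy a b with h|h|h
  · rw [hk_lt h, hk_gt h]; norm_num
  · subst h; rw [hk_self]; norm_num
  · rw [hk_gt h, hk_lt h]; norm_num

lemma hk_meas : Measurable (fun p : ℝ × ℝ => hk p.1 p.2) := by
  unfold hk
  exact Measurable.ite (measurableSet_lt measurable_fst measurable_snd)
    measurable_const
    (Measurable.ite (measurableSet_eq_fun measurable_fst measurable_snd)
      measurable_const measurable_const)

lemma hk_meas_left (b : ℝ) : Measurable (fun a => hk a b) :=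
  hk_meas.comp (measurable_id.prodMk measurable_const)

lemma hk_meas_right (a : ℝ) : Measurable (fun b => hk a b) :=
  hk_meas.comp (measurable_const.prodMk measurable_id)

lemma abs_mul_le_one {a b : ℝ} (ha : |a| ≤ 1) (hb : |b| ≤ 1) : |a * b| ≤ 1 := by
  rw [abs_mul]; nlinarith [abs_nonneg a, abs_nonneg b]

set_option maxHeartbeats 2000000 in
lemma key3 (x y z : ℝ) :
    hk y x * hk z x + hk x y * hk z y + hk x z * hk y z
      = 1 - (1/4) * ((if y = x then (1:ℝ) else 0) * (if z = x then 1 else 0)) := by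
  rcases lt_trichotomy x y with h1|h1|h1 <;> rcases lt_trichotomy y z with h2|h2|h2 <;>
    rcases lt_trichotomy x z with h3|h3|h3 <;> subst_vars <;>
    first
    | linarith
    | (simp (disch := assumption) only [hk_lt, hk_gt, hk_self]
       split_ifs <;> subst_vars <;> first | linarith | norm_num)

section Aux

variable {α : Type*} [MeasurableSpace α] {ν : Measure α}

lemma bdd_int [IsFiniteMeasure ν] {f : α → ℝ} (hf : AEStronglyMeasurable f ν)
    (hb : ∀ x, |f x| ≤ 1) : Integrable f ν :=
  (integrable_const (1:ℝ)).mono' hf (ae_of_all _ fun x => by simpa using hb x)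

lemma abs_int_le [IsProbabilityMeasure ν] {f : α → ℝ} (hb : ∀ x, |f x| ≤ 1) :
    |∫ x, f x ∂ν| ≤ 1 := by
  have := norm_integral_le_of_norm_le_const (μ := ν) (f := f) (C := 1)
    (ae_of_all _ fun x => by simpa using hb x)
  simpa using this

end Aux

section Main

variable {μ : Measure ℝ} [IsProbabilityMeasure μ]

lemma Iic_split (x : ℝ) : (μ (Iic x)).toReal = (μ (Iio x)).toReal + (μ {x}).toReal := by
  rw [← Iio_union_right, measure_union (by simp) (measurableSet_singleton x),
    ENNReal.toReal_add (measure_ne_top _ _) (measure_ne_top _ _)]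

lemma meas_F : Measurable (fun x => (μ (Iic x)).toReal) :=
  Monotone.measurable (fun a b hab =>
    ENNReal.toReal_mono (measure_ne_top _ _) (measure_mono (Iic_subset_Iic.2 hab)))

lemma meas_Fio : Measurable (fun x => (μ (Iio x)).toReal) :=
  Monotone.measurable (fun a b hab =>
    ENNReal.toReal_mono (measure_ne_top _ _) (measure_mono (Iio_subset_Iio hab)))

lemma meas_p : Measurable (fun x => (μ {x}).toReal) := by
  have : (fun x => (μ {x}).toReal)
      = fun x => (μ (Iic x)).toReal - (μ (Iio x)).toReal := by
    funext x; rw [Iic_split]; ring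
  rw [this]; exact meas_F.sub meas_Fio

lemma p_nonneg (x : ℝ) : 0 ≤ (μ {x}).toReal := ENNReal.toReal_nonneg

lemma p_le_F (x : ℝ) : (μ {x}).toReal ≤ (μ (Iic x)).toReal :=
  ENNReal.toReal_mono (measure_ne_top _ _) (measure_mono (by simp))

lemma F_le_one (x : ℝ) : (μ (Iic x)).toReal ≤ 1 := by
  have : (μ (Iic x)).toReal ≤ (μ univ).toReal :=
    ENNReal.toReal_mono (measure_ne_top _ _) (measure_mono (subset_univ _))
  simpa using this

lemma p_abs_le (x : ℝ) : |(μ {x}).toReal| ≤ 1 := by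
  rw [abs_of_nonneg (p_nonneg x)]
  exact (p_le_F x).trans (F_le_one x)

variable {Fmid : ℝ → ℝ}
  (hFmid : ∀ x, Fmid x = (μ (Iic x)).toReal - (μ {x}).toReal / 2)

include hFmid

lemma meas_Fmid : Measurable Fmid := by
  have : Fmid = fun x => (μ (Iic x)).toReal - (μ {x}).toReal / 2 := funext hFmid
  rw [this]; exact meas_F.sub (meas_p.div_const 2)

lemma Fmid_abs_le (x : ℝ) : |Fmid x| ≤ 1 := by
  rw [hFmid x, abs_le]
  constructor
  · nlinarith [p_le_F (μ := μ) x, p_nonneg (μ := μ) x, F_le_one (μ := μ) x]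
  · nlinarith [p_le_F (μ := μ) x, p_nonneg (μ := μ) x, F_le_one (μ := μ) x]

lemma int_Fmid : Integrable Fmid μ :=
  bdd_int (meas_Fmid hFmid).aestronglyMeasurable (Fmid_abs_le hFmid)

/-- `∫ hk y x dμ(y) = Fmid x`. -/
lemma int_hk (x : ℝ) : ∫ y, hk y x ∂μ = Fmid x := by
  have h1 : (fun y => hk y x)
      = fun y => (Iio x).indicator (fun _ => (1:ℝ)) y
          + ({x} : Set ℝ).indicator (fun _ => (1:ℝ)/2) y := by
    funext y
    rcases lt_trichotomy y x with h|h|h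
    · rw [hk_lt h]; simp [indicator_apply, h, h.ne]
    · subst h; rw [hk_self]; simp [indicator_apply]
    · rw [hk_gt h]; simp [indicator_apply, not_lt.2 h.le, h.ne']
  rw [h1, integral_add ((integrable_const _).indicator measurableSet_Iio)
      ((integrable_const _).indicator (measurableSet_singleton x)),
    integral_indicator_const _ measurableSet_Iio,
    integral_indicator_const _ (measurableSet_singleton x), hFmid x, Iic_split x]
  simp [smul_eq_mul]; simp only [measureReal_def]; ring

lemma int_hk' (x : ℝ) : ∫ y, hk x y ∂μ = 1 - Fmid x := by
  have h1 : (fun y => hk x y) = fun y => 1 - hk y x := by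
    funext y; have := hk_add x y; linarith
  rw [h1, integral_sub (integrable_const 1)
      (bdd_int (hk_meas_left x).aestronglyMeasurable (fun y => hk_abs_le y x)),
    integral_const, int_hk hFmid]
  simp

lemma mean_Fmid : ∫ x, Fmid x ∂μ = 1/2 := by
  have hswap : ∫ x, ∫ y, hk x y ∂μ ∂μ = ∫ y, ∫ x, hk x y ∂μ ∂μ :=
    integral_integral_swap (bdd_int hk_meas.aestronglyMeasurable
      (fun p => hk_abs_le p.1 p.2))
  simp_rw [int_hk' hFmid, int_hk hFmid] at hswap
  rw [integral_sub (integrable_const 1) (int_Fmid hFmid), integral_const] at hswap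
  simp at hswap
  linarith

end Main
section Main2

variable {μ : Measure ℝ} [IsProbabilityMeasure μ] {Fmid : ℝ → ℝ}
  (hFmid : ∀ x, Fmid x = (μ (Iic x)).toReal - (μ {x}).toReal / 2)

lemma int_delta (x : ℝ) : ∫ z, (if z = x then (1:ℝ) else 0) ∂μ = (μ {x}).toReal := by
  have h1 : (fun z => if z = x then (1:ℝ) else 0)
      = ({x} : Set ℝ).indicator (fun _ => (1:ℝ)) := by
    funext z; simp [indicator_apply]
  rw [h1, integral_indicator_const _ (measurableSet_singleton x)]
  simp
  rfl

include hFmid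

lemma eq2 (x y : ℝ) :
    hk y x * Fmid x + hk x y * Fmid y + (∫ z, hk x z * hk y z ∂μ)
      = 1 - (1/4) * ((if y = x then (1:ℝ) else 0) * (μ {x}).toReal) := by
  have i1 : Integrable (fun z => hk y x * hk z x) μ :=
    (bdd_int (hk_meas_left x).aestronglyMeasurable (fun z => hk_abs_le z x)).const_mul _
  have i2 : Integrable (fun z => hk x y * hk z y) μ :=
    (bdd_int (hk_meas_left y).aestronglyMeasurable (fun z => hk_abs_le z y)).const_mul _
  have i3 : Integrable (fun z => hk x z * hk y z) μ :=
    bdd_int ((hk_meas_right x).mul (hk_meas_right y)).aestronglyMeasurable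
      (fun z => abs_mul_le_one (hk_abs_le x z) (hk_abs_le y z))
  have i4 : Integrable (fun z => (if y = x then (1:ℝ) else 0) * (if z = x then (1:ℝ) else 0)) μ := by
    refine Integrable.const_mul ?_ _
    refine bdd_int ?_ (fun z => by split_ifs <;> norm_num)
    have : (fun z => if z = x then (1:ℝ) else 0)
        = ({x} : Set ℝ).indicator (fun _ => (1:ℝ)) := by
      funext z; simp [indicator_apply]
    rw [this]
    exact (measurable_const.indicator (measurableSet_singleton x)).aestronglyMeasurable
  have i12 : Integrable (fun z => hk y x * hk z x + hk x y * hk z y) μ := i1.add i2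
  have L : ∫ z, (hk y x * hk z x + hk x y * hk z y + hk x z * hk y z) ∂μ
      = hk y x * Fmid x + hk x y * Fmid y + ∫ z, hk x z * hk y z ∂μ := by
    rw [integral_add i12 i3, integral_add i1 i2, integral_const_mul,
      integral_const_mul, int_hk hFmid, int_hk hFmid]
  have R : ∫ z, (hk y x * hk z x + hk x y * hk z y + hk x z * hk y z) ∂μ
      = 1 - (1/4) * ((if y = x then (1:ℝ) else 0) * (μ {x}).toReal) := by
    simp_rw [key3 x y]
    rw [integral_sub (integrable_const 1) (i4.const_mul _), integral_const,
      integral_const_mul, integral_const_mul, int_delta]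
    simp
  rw [← L, R]

lemma eq3 (x : ℝ) :
    Fmid x * Fmid x + (∫ y, hk x y * Fmid y ∂μ) + (∫ y, hk x y * Fmid y ∂μ)
      = 1 - (1/4) * ((μ {x}).toReal * (μ {x}).toReal) := by
  have a1 : Integrable (fun y => hk y x * Fmid x) μ :=
    (bdd_int (hk_meas_left x).aestronglyMeasurable (fun y => hk_abs_le y x)).mul_const _
  have a2 : Integrable (fun y => hk x y * Fmid y) μ :=
    bdd_int ((hk_meas_right x).mul (meas_Fmid hFmid)).aestronglyMeasurable
      (fun y => abs_mul_le_one (hk_abs_le x y) (Fmid_abs_le hFmid y))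
  have Cmeas : Measurable (fun y => ∫ z, hk x z * hk y z ∂μ) := by
    have hf : StronglyMeasurable (fun q : ℝ × ℝ => hk x q.2 * hk q.1 q.2) :=
      (((hk_meas_right x).comp measurable_snd).mul hk_meas).stronglyMeasurable
    exact hf.integral_prod_right'.measurable
  have a3 : Integrable (fun y => ∫ z, hk x z * hk y z ∂μ) μ :=
    bdd_int Cmeas.aestronglyMeasurable
      (fun y => abs_int_le (fun z => abs_mul_le_one (hk_abs_le x z) (hk_abs_le y z)))
  have a4 : Integrable (fun y => (if y = x then (1:ℝ) else 0) * (μ {x}).toReal) μ := by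
    refine Integrable.mul_const ?_ _
    refine bdd_int ?_ (fun y => by split_ifs <;> norm_num)
    have : (fun y => if y = x then (1:ℝ) else 0)
        = ({x} : Set ℝ).indicator (fun _ => (1:ℝ)) := by
      funext z; simp [indicator_apply]
    rw [this]
    exact (measurable_const.indicator (measurableSet_singleton x)).aestronglyMeasurable
  -- integrate eq2 over y
  have a12 : Integrable (fun y => hk y x * Fmid x + hk x y * Fmid y) μ := a1.add a2
  have h := integral_congr_ae (μ := μ) (ae_of_all _ (fun y => eq2 hFmid x y))
  rw [integral_add a12 a3, integral_add a1 a2, integral_mul_const,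
    int_hk hFmid, integral_sub (integrable_const 1) (a4.const_mul _), integral_const,
    integral_const_mul, integral_mul_const, int_delta] at h
  -- identify the C-integral with B
  have hD : ∫ y, (∫ z, hk x z * hk y z ∂μ) ∂μ = ∫ y, hk x y * Fmid y ∂μ := by
    have hswap : ∫ y, ∫ z, hk x z * hk y z ∂μ ∂μ = ∫ z, ∫ y, hk x z * hk y z ∂μ ∂μ :=
      integral_integral_swap (bdd_int
        (((hk_meas_right x).comp measurable_snd).mul hk_meas).aestronglyMeasurable
        (fun p => abs_mul_le_one (hk_abs_le x p.2) (hk_abs_le p.1 p.2)))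
    rw [hswap]
    simp_rw [integral_const_mul, int_hk hFmid]
  rw [hD] at h
  simpa using h

lemma momtwo : 3 * ∫ x, Fmid x * Fmid x ∂μ
    = 1 - (1/4) * ∫ x, (μ {x}).toReal * (μ {x}).toReal ∂μ := by
  have b1 : Integrable (fun x => Fmid x * Fmid x) μ :=
    bdd_int ((meas_Fmid hFmid).mul (meas_Fmid hFmid)).aestronglyMeasurable
      (fun x => abs_mul_le_one (Fmid_abs_le hFmid x) (Fmid_abs_le hFmid x))
  have Bmeas : Measurable (fun x => ∫ y, hk x y * Fmid y ∂μ) := by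
    have hf : StronglyMeasurable (fun q : ℝ × ℝ => hk q.1 q.2 * Fmid q.2) :=
      (hk_meas.mul ((meas_Fmid hFmid).comp measurable_snd)).stronglyMeasurable
    exact hf.integral_prod_right'.measurable
  have b2 : Integrable (fun x => ∫ y, hk x y * Fmid y ∂μ) μ :=
    bdd_int Bmeas.aestronglyMeasurable
      (fun x => abs_int_le (fun y => abs_mul_le_one (hk_abs_le x y) (Fmid_abs_le hFmid y)))
  have b3 : Integrable (fun x => (μ {x}).toReal * (μ {x}).toReal) μ :=
    bdd_int (meas_p.mul meas_p).aestronglyMeasurable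
      (fun x => abs_mul_le_one (p_abs_le x) (p_abs_le x))
  have hB : ∫ x, (∫ y, hk x y * Fmid y ∂μ) ∂μ = ∫ x, Fmid x * Fmid x ∂μ := by
    have hswap : ∫ x, ∫ y, hk x y * Fmid y ∂μ ∂μ = ∫ y, ∫ x, hk x y * Fmid y ∂μ ∂μ :=
      integral_integral_swap (bdd_int
        (hk_meas.mul ((meas_Fmid hFmid).comp measurable_snd)).aestronglyMeasurable
        (fun p => abs_mul_le_one (hk_abs_le p.1 p.2) (Fmid_abs_le hFmid p.2)))
    rw [hswap]
    simp_rw [integral_mul_const, int_hk hFmid]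
  have b12 : Integrable (fun x => Fmid x * Fmid x + ∫ y, hk x y * Fmid y ∂μ) μ := b1.add b2
  have h := integral_congr_ae (μ := μ) (ae_of_all _ (fun x => eq3 hFmid x))
  rw [integral_add b12 b2, integral_add b1 b2, hB,
    integral_sub (integrable_const 1) (b3.const_mul _), integral_const,
    integral_const_mul] at h
  simp at h
  linarith

end Main2
section Final

variable {μ : Measure ℝ} [IsProbabilityMeasure μ]

lemma ptsum : ∫ x, (μ {x}).toReal * (μ {x}).toReal ∂μ = ∑' x : ℝ, (μ {x}).toReal ^ 3 := by
  set D : Set ℝ := {t : ℝ | 0 < μ {t}} with hD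
  have hDc : D.Countable := by
    have := Measure.countable_meas_level_set_pos (μ := μ) (g := id) measurable_id
    simpa [hD, Set.setOf_eq_eq_singleton] using this
  have hDm : MeasurableSet D := hDc.measurableSet
  have hsupp : ∀ x ∉ D, (μ {x}).toReal * (μ {x}).toReal = 0 := by
    intro x hx
    have : μ {x} = 0 := by
      by_contra hne
      exact hx (pos_iff_ne_zero.2 hne)
    simp [this]
  have hint : Integrable (fun x => (μ {x}).toReal * (μ {x}).toReal) μ :=
    bdd_int (meas_p.mul meas_p).aestronglyMeasurable
      (fun x => abs_mul_le_one (p_abs_le x) (p_abs_le x))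
  have h1 : ∫ x, (μ {x}).toReal * (μ {x}).toReal ∂μ
      = ∫ x in D, (μ {x}).toReal * (μ {x}).toReal ∂μ := by
    rw [← integral_indicator hDm]
    congr 1
    funext x
    by_cases hx : x ∈ D
    · simp [indicator_apply, hx]
    · simp [indicator_apply, hx, hsupp x hx]
  have h2 : ∫ x in D, (μ {x}).toReal * (μ {x}).toReal ∂μ
      = ∑' a : D, (μ {(a : ℝ)}).toReal • ((μ {(a : ℝ)}).toReal * (μ {(a : ℝ)}).toReal) :=
    setIntegral_countable _ hDc hint.integrableOn
  have h3 : ∑' a : D, (μ {(a : ℝ)}).toReal • ((μ {(a : ℝ)}).toReal * (μ {(a : ℝ)}).toReal)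
      = ∑' a : D, (μ {(a : ℝ)}).toReal ^ 3 := by
    apply tsum_congr; intro a; rw [smul_eq_mul]; ring
  have h4 : ∑' a : D, (μ {(a : ℝ)}).toReal ^ 3 = ∑' x : ℝ, (μ {x}).toReal ^ 3 := by
    refine tsum_subtype_eq_of_support_subset (f := fun x : ℝ => (μ {x}).toReal ^ 3) (s := D) ?_
    intro x hx
    simp only [Function.mem_support, ne_eq] at hx
    by_contra hxD
    have : μ {x} = 0 := by
      by_contra hne
      exact hxD (pos_iff_ne_zero.2 hne)
    simp [this] at hx
  rw [h1, h2, h3, h4]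

end Final

theorem lp_variance_mid_distribution (μ : Measure ℝ) [IsProbabilityMeasure μ]
    (Fmid : ℝ → ℝ) (hFmid : ∀ x, Fmid x = (μ (Iic x)).toReal - (μ {x}).toReal / 2) :
    ∫ x, (Fmid x - ∫ y, Fmid y ∂μ) ^ 2 ∂μ = (1 - ∑' x : ℝ, (μ {x}).toReal ^ 3) / 12 := by
  have hmean : ∫ y, Fmid y ∂μ = 1/2 := mean_Fmid hFmid
  have hmom : 3 * ∫ x, Fmid x * Fmid x ∂μ
      = 1 - (1/4) * ∫ x, (μ {x}).toReal * (μ {x}).toReal ∂μ := momtwo hFmid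
  rw [ptsum] at hmom
  have b1 : Integrable (fun x => Fmid x * Fmid x) μ :=
    bdd_int ((meas_Fmid hFmid).mul (meas_Fmid hFmid)).aestronglyMeasurable
      (fun x => abs_mul_le_one (Fmid_abs_le hFmid x) (Fmid_abs_le hFmid x))
  have hexp : ∀ x : ℝ, (Fmid x - ∫ y, Fmid y ∂μ) ^ 2
      = Fmid x * Fmid x - Fmid x + 1/4 := by
    intro x; rw [hmean]; ring
  rw [integral_congr_ae (ae_of_all _ hexp)]
  have bsub : Integrable (fun x => Fmid x * Fmid x - Fmid x) μ := b1.sub (int_Fmid hFmid)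
  rw [integral_add bsub (integrable_const _), integral_sub b1 (int_Fmid hFmid),
    integral_const, hmean]
  simp only [measure_univ, ENNReal.toReal_one, probReal_univ, smul_eq_mul, one_mul]
  linarith
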